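/- Let H be a real Hilbert space, T_l : H → H a bounded linear operator with ‖T_l‖ ≤ 1, z ∈ H, and define the affine operator T x := T_l x + z. Assume T has a fixed point φ̄ ∈ H. Let (d_k) be a sequence with d_k ∈ [0,1] such that Σ_{k=1}^{∞} d_k (1 − d_k) diverges. Then for every φ₁ ∈ H, the segmenting Mann iteration φ_{k+1} := (1 − d_k) φ_k + d_k T(φ_k) satisfies that (I − T) φ_k = φ_k − T(φ_k) converges strongly to zero. -/

import Mathlib

open Filter Finset

private lemma mann_key_identity {H : Type*} [NormedAddCommGroup H] [InnerProductSpace ℝ H]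
    (a b : H) (t : ℝ) :
    ‖(1 - t) • a + t • b‖ ^ 2
      = (1 - t) * ‖a‖ ^ 2 + t * ‖b‖ ^ 2 - t * (1 - t) * ‖a - b‖ ^ 2 := by
  have h1 : ‖(1 - t) • a + t • b‖ ^ 2
      = ‖(1 - t) • a‖ ^ 2 + 2 * inner ℝ ((1 - t) • a) (t • b) + ‖t • b‖ ^ 2 :=
    norm_add_sq_real _ _
  have h2 : ‖a - b‖ ^ 2 = ‖a‖ ^ 2 - 2 * inner ℝ a b + ‖b‖ ^ 2 := norm_sub_sq_real _ _
  rw [h1, norm_smul, norm_smul, real_inner_smul_left, real_inner_smul_right, h2,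
    Real.norm_eq_abs, Real.norm_eq_abs, mul_pow, mul_pow, sq_abs, sq_abs]
  ring

/-- **Theorem 4.2 (residual convergence of the Mann–Maz'ya iteration).** Let `H` be a
real Hilbert space, `T_l` a bounded linear operator with `‖T_l‖ ≤ 1`, `T x = T_l x + z`
an affine operator having a fixed point `φ̄`, and `(d k)` a sequence in `[0,1]` with
`∑ d k (1 - d k) = ∞`. Then for every `φ₁ ∈ H` the segmenting Mann iteration satisfies
`(I - T) φ k → 0` strongly. -/
theorem mann_mazya_residual_tendsto_zero
    {H : Type*} [NormedAddCommGroup H] [InnerProductSpace ℝ H] [CompleteSpace H]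
    (Tl : H →L[ℝ] H) (hTl : ‖Tl‖ ≤ 1) (z : H)
    (φbar : H) (hfix : φbar = Tl φbar + z)
    (d : ℕ → ℝ) (hd : ∀ k, d k ∈ Set.Icc (0 : ℝ) 1)
    (hdiv : Tendsto (fun n => ∑ k ∈ Icc 1 n, d k * (1 - d k)) atTop atTop)
    (φ : ℕ → H)
    (hrec : ∀ k, 1 ≤ k → φ (k + 1) = (1 - d k) • φ k + d k • (Tl (φ k) + z)) :
    Tendsto (fun k => φ k - (Tl (φ k) + z)) atTop (nhds 0) := by
  set ψ : ℕ → H := fun k => φ k - φbar with hψdef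
  set r : ℕ → H := fun k => φ k - (Tl (φ k) + z) with hrdef
  have hz : z = φbar - Tl φbar := (sub_eq_of_eq_add' hfix).symm
  -- residual in terms of ψ
  have hrψ : ∀ k, r k = ψ k - Tl (ψ k) := by
    intro k
    simp only [hrdef, hψdef, map_sub]
    rw [hz]
    module
  -- recurrence for ψ
  have hψrec : ∀ k, 1 ≤ k → ψ (k + 1) = (1 - d k) • ψ k + d k • Tl (ψ k) := by
    intro k hk
    simp only [hψdef, map_sub]
    rw [hrec k hk, hz]
    module
  -- recurrence for r
  have hrrec : ∀ k, 1 ≤ k → r (k + 1) = (1 - d k) • r k + d k • Tl (r k) := by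
    intro k hk
    rw [hrψ (k + 1), hψrec k hk, hrψ k]
    simp only [map_add, map_smul, map_sub]
    module
  have hTx : ∀ x : H, ‖Tl x‖ ≤ ‖x‖ := by
    intro x
    calc ‖Tl x‖ ≤ ‖Tl‖ * ‖x‖ := Tl.le_opNorm x
    _ ≤ 1 * ‖x‖ := by nlinarith [norm_nonneg x]
    _ = ‖x‖ := one_mul _
  -- the residual norm is nonincreasing
  have hrstep : ∀ k, 1 ≤ k → ‖r (k + 1)‖ ≤ ‖r k‖ := by
    intro k hk
    obtain ⟨hd0, hd1⟩ := hd k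
    rw [hrrec k hk]
    calc ‖(1 - d k) • r k + d k • Tl (r k)‖
        ≤ ‖(1 - d k) • r k‖ + ‖d k • Tl (r k)‖ := norm_add_le _ _
      _ = (1 - d k) * ‖r k‖ + d k * ‖Tl (r k)‖ := by
          rw [norm_smul, norm_smul, Real.norm_eq_abs, Real.norm_eq_abs,
            abs_of_nonneg (by linarith), abs_of_nonneg hd0]
      _ ≤ ‖r k‖ := by nlinarith [hTx (r k), norm_nonneg (r k)]
  have hrmono : ∀ k m, 1 ≤ k → k ≤ m → ‖r m‖ ≤ ‖r k‖ := by
    intro k m hk hkm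
    induction m, hkm using Nat.le_induction with
    | base => exact le_rfl
    | succ n hn ih => exact (hrstep n (hk.trans hn)).trans ih
  -- key energy estimate
  have hψstep : ∀ k, 1 ≤ k →
      ‖ψ (k + 1)‖ ^ 2 ≤ ‖ψ k‖ ^ 2 - d k * (1 - d k) * ‖r k‖ ^ 2 := by
    intro k hk
    obtain ⟨hd0, hd1⟩ := hd k
    rw [hψrec k hk, mann_key_identity, ← hrψ k]
    have h2 : ‖Tl (ψ k)‖ ^ 2 ≤ ‖ψ k‖ ^ 2 := by
      nlinarith [hTx (ψ k), norm_nonneg (ψ k), norm_nonneg (Tl (ψ k))]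
    have h3 : d k * ‖Tl (ψ k)‖ ^ 2 ≤ d k * ‖ψ k‖ ^ 2 := mul_le_mul_of_nonneg_left h2 hd0
    linarith
  -- summed estimate
  have hsum : ∀ n, ∑ k ∈ Icc 1 n, d k * (1 - d k) * ‖r k‖ ^ 2
      ≤ ‖ψ 1‖ ^ 2 - ‖ψ (n + 1)‖ ^ 2 := by
    intro n
    induction n with
    | zero => simp
    | succ n ih =>
      rw [Finset.sum_Icc_succ_top (by omega)]
      have := hψstep (n + 1) (by omega)
      linarith
  by_cases hcase : ∀ ε > (0 : ℝ), ∃ K, 1 ≤ K ∧ ‖r K‖ < ε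
  · rw [NormedAddCommGroup.tendsto_nhds_zero]
    intro ε hε
    obtain ⟨K, hK1, hKε⟩ := hcase ε hε
    filter_upwards [eventually_ge_atTop K] with m hm
    exact lt_of_le_of_lt (hrmono K m hK1 hm) hKε
  · exfalso
    push_neg at hcase
    obtain ⟨ε, hε, hbig⟩ := hcase
    have hbound : ∀ n, ε ^ 2 * ∑ k ∈ Icc 1 n, d k * (1 - d k) ≤ ‖ψ 1‖ ^ 2 := by
      intro n
      have h1 : ε ^ 2 * ∑ k ∈ Icc 1 n, d k * (1 - d k)
          ≤ ∑ k ∈ Icc 1 n, d k * (1 - d k) * ‖r k‖ ^ 2 := by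
        rw [Finset.mul_sum]
        apply Finset.sum_le_sum
        intro k hk
        obtain ⟨hd0, hd1⟩ := hd k
        have hk1 : 1 ≤ k := (Finset.mem_Icc.mp hk).1
        have := hbig k hk1
        have hεr : ε ^ 2 ≤ ‖r k‖ ^ 2 := by nlinarith [norm_nonneg (r k)]
        have h4 : (0 : ℝ) ≤ d k * (1 - d k) := mul_nonneg hd0 (by linarith)
        calc ε ^ 2 * (d k * (1 - d k)) = d k * (1 - d k) * ε ^ 2 := by ring
          _ ≤ d k * (1 - d k) * ‖r k‖ ^ 2 := mul_le_mul_of_nonneg_left hεr h4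
      have h2 := hsum n
      nlinarith [sq_nonneg (‖ψ (n + 1)‖)]
    obtain ⟨n, hn⟩ := (hdiv.eventually_ge_atTop (‖ψ 1‖ ^ 2 / ε ^ 2 + 1)).exists
    have := hbound n
    have hε2 : (0 : ℝ) < ε ^ 2 := by positivity
    have h5 : ε ^ 2 * (‖ψ 1‖ ^ 2 / ε ^ 2 + 1) ≤ ε ^ 2 * ∑ k ∈ Icc 1 n, d k * (1 - d k) :=
      mul_le_mul_of_nonneg_left hn hε2.le
    have h6 : ε ^ 2 * (‖ψ 1‖ ^ 2 / ε ^ 2 + 1) = ‖ψ 1‖ ^ 2 + ε ^ 2 := by field_simp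
    linarith
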